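/- Let (X,d) be a proper geodesic Gromov hyperbolic metric space and f : X → X a non-expanding map. (i) If a boundary regular fixed point η of f has stable dilation Λ_η < 1, then f is hyperbolic and η is its Denjoy–Wolff point. (ii) If f is non-elliptic, then the only boundary regular fixed point η of f with stable dilation Λ_η ≤ 1 is the Denjoy–Wolff point of f. -/

import Mathlib

/- Preliminary definitions: Gromov hyperbolicity, Gromov boundary (via geodesic rays),
   dilations, boundary regular fixed points, horofunctions, backward orbits. -/

noncomputable section

open Filter Topology Metric Set

/-- The Gromov product of `x` and `y` with respect to the base point `p`. -/
def gromovProd {X : Type*} [MetricSpace X] (p x y : X) : ℝ :=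
  (dist p x + dist p y - dist x y) / 2

/-- A (unit speed) geodesic ray, parametrized by `t ≥ 0`. -/
def IsGeodesicRay {X : Type*} [MetricSpace X] (γ : ℝ → X) : Prop :=
  ∀ s t : ℝ, 0 ≤ s → 0 ≤ t → dist (γ s) (γ t) = |s - t|

/-- A (unit speed) geodesic segment from `x` to `y`, parametrized on `[0, dist x y]`. -/
def IsGeodesicFromTo {X : Type*} [MetricSpace X] (γ : ℝ → X) (x y : X) : Prop :=
  γ 0 = x ∧ γ (dist x y) = y ∧
    ∀ s t : ℝ, s ∈ Set.Icc 0 (dist x y) → t ∈ Set.Icc 0 (dist x y) →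
      dist (γ s) (γ t) = |s - t|

/-- A geodesic metric space: any two points are joined by a geodesic. -/
def IsGeodesicSpace (X : Type*) [MetricSpace X] : Prop :=
  ∀ x y : X, ∃ γ : ℝ → X, IsGeodesicFromTo γ x y

/-- `δ`-hyperbolicity via slim triangles: every side of every geodesic triangle is contained
in the `δ`-neighborhood of the union of the other two sides. -/
def IsDeltaHyperbolic (X : Type*) [MetricSpace X] (δ : ℝ) : Prop :=
  ∀ x y z : X, ∀ α β γ : ℝ → X,
    IsGeodesicFromTo α x y → IsGeodesicFromTo β y z → IsGeodesicFromTo γ x z →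
    ∀ t ∈ Set.Icc (0 : ℝ) (dist x z),
      ∃ u ∈ α '' Set.Icc 0 (dist x y) ∪ β '' Set.Icc 0 (dist y z), dist (γ t) u ≤ δ

/-- A Gromov hyperbolic space: `δ`-hyperbolic for some `δ ≥ 0`. -/
def GromovHyperbolic (X : Type*) [MetricSpace X] : Prop :=
  ∃ δ : ℝ, 0 ≤ δ ∧ IsDeltaHyperbolic X δ

/-- The trace on `X` of the filter of neighborhoods, in the Gromov compactification, of the
boundary point determined by the geodesic ray `γ`: a sequence (or a function) converges to
the boundary point `[γ]` iff its Gromov products with points far along `γ` tend to `+∞`. -/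
def gromovFilter {X : Type*} [MetricSpace X] (γ : ℝ → X) : Filter X :=
  ⨅ M : ℝ, Filter.principal
    {x | M ≤ Filter.liminf (fun t : ℝ => gromovProd (γ 0) x (γ t)) Filter.atTop}

/-- Two geodesic rays are asymptotic, i.e. they determine the same point of the
Gromov boundary. -/
def AsympRays {X : Type*} [MetricSpace X] (γ σ : ℝ → X) : Prop :=
  ∃ C : ℝ, ∀ t : ℝ, 0 ≤ t → dist (γ t) (σ t) ≤ C

/-- A non-expanding (1-Lipschitz) map. -/
def Nonexpanding {X : Type*} [MetricSpace X] (f : X → X) : Prop :=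
  ∀ x y : X, dist (f x) (f y) ≤ dist x y

/-- Membership in the geodesic region `A(σ, R)` with vertex `[σ]`. -/
def InGeodesicRegion {X : Type*} [MetricSpace X] (σ : ℝ → X) (R : ℝ) (x : X) : Prop :=
  ∃ t : ℝ, 0 ≤ t ∧ dist x (σ t) < R

/-- `f` has geodesic limit `[ξ]` at the boundary point `[γ]`: for every sequence converging
to `[γ]` inside a geodesic region with vertex `[γ]`, the image sequence converges to `[ξ]`. -/
def HasGeodesicLimitAt {X : Type*} [MetricSpace X] (f : X → X) (γ ξ : ℝ → X) : Prop :=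
  ∀ σ : ℝ → X, IsGeodesicRay σ → AsympRays γ σ → ∀ R : ℝ, 0 < R →
    ∀ x : ℕ → X, (∀ n, InGeodesicRegion σ R (x n)) →
      Filter.Tendsto x Filter.atTop (gromovFilter γ) →
      Filter.Tendsto (fun n => f (x n)) Filter.atTop (gromovFilter ξ)

/-- `log λ_{η,p}(f)`, the logarithm of the dilation of `f` at the boundary point `η = [γ]`
with respect to the base point `p`, as an extended real number:
`log λ_{η,p}(f) = liminf_{x → η} (d(x,p) - d(f(x),p))`. -/
def logDilation {X : Type*} [MetricSpace X] (p : X) (γ : ℝ → X) (f : X → X) : EReal :=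
  Filter.liminf (fun x => ((dist x p - dist (f x) p : ℝ) : EReal)) (gromovFilter γ)

/-- The dilation of `f` at `[γ]` w.r.t. `p` is finite with logarithm the real number `L`. -/
def HasLogDilation {X : Type*} [MetricSpace X] (p : X) (γ : ℝ → X) (f : X → X) (L : ℝ) : Prop :=
  logDilation p γ f = (L : EReal)

/-- The point `[γ]` of the Gromov boundary is a boundary regular fixed point (BRFP) of `f`:
the dilation at `[γ]` is finite and `f` has geodesic limit `[γ]` at `[γ]`. -/
def IsBRFP {X : Type*} [MetricSpace X] (f : X → X) (γ : ℝ → X) : Prop :=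
  IsGeodesicRay γ ∧ logDilation (γ 0) γ f ≠ ⊤ ∧ HasGeodesicLimitAt f γ γ

/-- The stable dilation of `f` at the BRFP `[γ]` has logarithm `L`:
`log Λ_η = lim_n (1/n) log λ_{η,p}(f^n)`. -/
def HasStableLogDilation {X : Type*} [MetricSpace X] (p : X) (γ : ℝ → X) (f : X → X)
    (L : ℝ) : Prop :=
  ∃ l : ℕ → ℝ, (∀ n : ℕ, 1 ≤ n → HasLogDilation p γ (f^[n]) (l n)) ∧
    Filter.Tendsto (fun n : ℕ => l n / n) Filter.atTop (nhds L)

/-- A backward orbit of `f`. -/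
def IsBackwardOrbit {X : Type*} (f : X → X) (x : ℕ → X) : Prop :=
  ∀ n : ℕ, f (x (n + 1)) = x n

/-- A sequence has bounded step. -/
def BoundedStep {X : Type*} [MetricSpace X] (x : ℕ → X) : Prop :=
  ∃ S : ℝ, ∀ n : ℕ, dist (x n) (x (n + 1)) ≤ S

/-- The backward step rate of a backward orbit with bounded step equals `b`:
`σ_m = lim_n d(x_{n+m}, x_n)` exists for each `m`, and `b = lim_m σ_m / m`. -/
def HasBackwardStepRate {X : Type*} [MetricSpace X] (x : ℕ → X) (b : ℝ) : Prop :=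
  ∃ σ : ℕ → ℝ,
    (∀ m : ℕ, Filter.Tendsto (fun n : ℕ => dist (x (n + m)) (x n)) Filter.atTop (nhds (σ m))) ∧
    Filter.Tendsto (fun m : ℕ => σ m / m) Filter.atTop (nhds b)

/-- `f` is elliptic: some (equivalently, every) forward orbit is bounded. -/
def IsElliptic {X : Type*} [MetricSpace X] (f : X → X) : Prop :=
  ∃ x : X, Bornology.IsBounded (Set.range fun n : ℕ => f^[n] x)

/-- The limit retract `ω_f`: the union of all ω-limit sets of forward orbits of `f`. -/
def limitRetract {X : Type*} [MetricSpace X] (f : X → X) : Set X :=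
  ⋃ x : X,
    {y | ∃ φ : ℕ → ℕ, StrictMono φ ∧ Filter.Tendsto (fun k => f^[φ k] x) Filter.atTop (nhds y)}

/-- `f` is weakly elliptic: elliptic with non-compact limit retract. -/
def WeaklyElliptic {X : Type*} [MetricSpace X] (f : X → X) : Prop :=
  IsElliptic f ∧ ¬ IsCompact (limitRetract f)

/-- The divergence rate (translation length) of `f` equals `c`:
`c(f) = lim_n d(x, f^n(x))/n` for every `x`. -/
def HasDivergenceRate {X : Type*} [MetricSpace X] (f : X → X) (c : ℝ) : Prop :=
  ∀ x : X, Filter.Tendsto (fun n : ℕ => dist x (f^[n] x) / n) Filter.atTop (nhds c)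

/-- `[γ]` is the Denjoy–Wolff point of `f`: every forward orbit converges to `[γ]`. -/
def IsDenjoyWolffPt {X : Type*} [MetricSpace X] (f : X → X) (γ : ℝ → X) : Prop :=
  IsGeodesicRay γ ∧
    ∀ x : X, Filter.Tendsto (fun n : ℕ => f^[n] x) Filter.atTop (gromovFilter γ)

/-- `h = h_{a,p}` is a horofunction normalized at `p` (`h(p) = 0`): a limit, along an escaping
sequence `w`, of the functions `y ↦ d(w_n, y) - d(w_n, p)`. -/
def IsHorofunctionAt {X : Type*} [MetricSpace X] (p : X) (h : X → ℝ) : Prop :=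
  h p = 0 ∧ ∃ w : ℕ → X, Filter.Tendsto (fun n => dist p (w n)) Filter.atTop Filter.atTop ∧
    ∀ y : X, Filter.Tendsto (fun n => dist (w n) y - dist (w n) p) Filter.atTop (nhds (h y))

/-- The horofunction class of `h` (a point `a ∈ ∂_H X`) projects under the canonical map
`Φ : X̄^H → X̄^G` to the Gromov boundary point `[γ]`, i.e. `a ∈ Φ⁻¹([γ])`. -/
def HoroProjectsTo {X : Type*} [MetricSpace X] (p : X) (h : X → ℝ) (γ : ℝ → X) : Prop :=
  ∃ w : ℕ → X, Filter.Tendsto (fun n => dist p (w n)) Filter.atTop Filter.atTop ∧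
    (∀ y : X, Filter.Tendsto (fun n => dist (w n) y - dist (w n) p) Filter.atTop (nhds (h y))) ∧
    Filter.Tendsto w Filter.atTop (gromovFilter γ)

/-- The horofunction compactification is equivalent to the Gromov compactification:
the canonical continuous map `Φ : X̄^H → X̄^G` is injective (hence a homeomorphism). -/
def CompactificationsEquivalent (X : Type*) [MetricSpace X] : Prop :=
  ∀ (p : X) (h₁ h₂ : X → ℝ), IsHorofunctionAt p h₁ → IsHorofunctionAt p h₂ →
    (∃ γ : ℝ → X, IsGeodesicRay γ ∧ HoroProjectsTo p h₁ γ ∧ HoroProjectsTo p h₂ γ) → h₁ = h₂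

/-- An escaping sequence: it eventually leaves every compact subset. -/
def Escaping {X : Type*} [TopologicalSpace X] (x : ℕ → X) : Prop :=
  ∀ K : Set X, IsCompact K → ∀ᶠ n in Filter.atTop, x n ∉ K

/-- A discrete quasi-geodesic. -/
def DiscreteQuasiGeodesic {X : Type*} [MetricSpace X] (x : ℕ → X) : Prop :=
  ∃ A B : ℝ, 1 ≤ A ∧ 0 ≤ B ∧ ∀ n m : ℕ,
    A⁻¹ * |(n : ℝ) - (m : ℝ)| - B ≤ dist (x n) (x m) ∧
      dist (x n) (x m) ≤ A * |(n : ℝ) - (m : ℝ)| + B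

/-- An almost geodesic curve. -/
def IsAlmostGeodesic {X : Type*} [MetricSpace X] (α : ℝ → X) : Prop :=
  ∀ ε : ℝ, 0 < ε → ∃ T : ℝ, 0 ≤ T ∧ ∀ t₁ t₂ : ℝ, T ≤ t₁ → T ≤ t₂ →
    |t₁ - t₂| - ε ≤ dist (α t₁) (α t₂) ∧ dist (α t₁) (α t₂) ≤ |t₁ - t₂|

end


/- ===== Auxiliary development ===== -/

namespace BRFPAux

open Filter Topology Metric Set

variable {X : Type*} [MetricSpace X]

lemma gp_nonneg (p x y : X) : 0 ≤ gromovProd p x y := by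
  have h := dist_triangle x p y
  rw [dist_comm x p] at h
  unfold gromovProd; linarith

lemma gp_le_left (p x y : X) : gromovProd p x y ≤ dist p x := by
  have h := dist_triangle p y x
  rw [dist_comm y x] at h
  unfold gromovProd
  linarith [dist_triangle p x y]

lemma gp_le_right (p x y : X) : gromovProd p x y ≤ dist p y := by
  have h := dist_triangle p x y
  unfold gromovProd
  linarith [dist_comm x y ▸ dist_triangle p y x]

lemma gp_comm (p x y : X) : gromovProd p x y = gromovProd p y x := by
  unfold gromovProd; rw [dist_comm x y]; ring

lemma gp_middle (p x x' y : X) : gromovProd p x y ≤ gromovProd p x' y + dist x x' := by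
  have h1 := dist_triangle p x' x
  have h2 := dist_triangle x' x y
  unfold gromovProd
  rw [dist_comm x' x] at h1 h2
  linarith

lemma gp_base (p q x y : X) : gromovProd q x y ≤ gromovProd p x y + dist p q := by
  have h1 := dist_triangle q p x
  have h2 := dist_triangle q p y
  unfold gromovProd
  rw [dist_comm q p] at h1 h2
  linarith

section Ray

variable {σ : ℝ → X}

lemma ray_dist (hσ : IsGeodesicRay σ) {s t : ℝ} (hs : 0 ≤ s) (ht : 0 ≤ t) :
    dist (σ s) (σ t) = |s - t| := hσ s t hs ht

lemma ray_dist0 (hσ : IsGeodesicRay σ) {t : ℝ} (ht : 0 ≤ t) : dist (σ 0) (σ t) = t := by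
  rw [hσ 0 t le_rfl ht]
  rw [abs_sub_comm, sub_zero, abs_of_nonneg ht]

lemma ray_seg (hσ : IsGeodesicRay σ) {t : ℝ} (ht : 0 ≤ t) :
    IsGeodesicFromTo σ (σ 0) (σ t) := by
  refine ⟨rfl, by rw [ray_dist0 hσ ht], ?_⟩
  rw [ray_dist0 hσ ht]
  intro a b ha hb
  exact hσ a b ha.1 hb.1

end Ray

section GpSec

variable {σ : ℝ → X}

/-- The (limit) Gromov product of `y` with the ray `σ`, w.r.t. the base point `σ 0`. -/
noncomputable def Gp (σ : ℝ → X) (y : X) : ℝ :=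
  sSup ((fun t => gromovProd (σ 0) y (σ t)) '' Set.Ici 0)

lemma Gp_bddAbove (σ : ℝ → X) (y : X) :
    BddAbove ((fun t => gromovProd (σ 0) y (σ t)) '' Set.Ici 0) := by
  refine ⟨dist (σ 0) y, ?_⟩
  rintro a ⟨t, _, rfl⟩
  exact gp_le_left _ _ _

lemma Gp_img_nonempty (σ : ℝ → X) (y : X) :
    ((fun t => gromovProd (σ 0) y (σ t)) '' Set.Ici 0).Nonempty :=
  ⟨gromovProd (σ 0) y (σ 0), ⟨0, Set.self_mem_Ici, rfl⟩⟩

lemma le_Gp {t : ℝ} (ht : 0 ≤ t) (y : X) : gromovProd (σ 0) y (σ t) ≤ Gp σ y :=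
  le_csSup (Gp_bddAbove σ y) ⟨t, Set.mem_Ici.mpr ht, rfl⟩

lemma Gp_le_dist (σ : ℝ → X) (y : X) : Gp σ y ≤ dist (σ 0) y :=
  csSup_le (Gp_img_nonempty σ y) (by rintro a ⟨t, _, rfl⟩; exact gp_le_left _ _ _)

lemma Gp_nonneg (σ : ℝ → X) (y : X) : 0 ≤ Gp σ y := by
  have h0 : gromovProd (σ 0) y (σ 0) = 0 := by
    unfold gromovProd
    rw [dist_self, dist_comm y (σ 0)]
    ring
  have h2 := le_Gp (σ := σ) (le_refl (0:ℝ)) y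
  rw [h0] at h2; exact h2

lemma exists_gp_gt {c : ℝ} {y : X} (h : c < Gp σ y) :
    ∃ t, 0 ≤ t ∧ c < gromovProd (σ 0) y (σ t) := by
  obtain ⟨a, ⟨t, ht, rfl⟩, hca⟩ := exists_lt_of_lt_csSup (Gp_img_nonempty σ y) h
  exact ⟨t, ht, hca⟩

lemma gp_mono (hσ : IsGeodesicRay σ) {t t' : ℝ} (h0 : 0 ≤ t) (htt : t ≤ t') (y : X) :
    gromovProd (σ 0) y (σ t) ≤ gromovProd (σ 0) y (σ t') := by
  have h0' : 0 ≤ t' := h0.trans htt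
  have hd : dist y (σ t') ≤ dist y (σ t) + (t' - t) := by
    have := dist_triangle y (σ t) (σ t')
    rw [ray_dist hσ h0 h0', abs_of_nonpos (by linarith)] at this
    linarith
  unfold gromovProd
  rw [ray_dist0 hσ h0, ray_dist0 hσ h0']
  linarith

lemma Gp_lip (σ : ℝ → X) (y z : X) : Gp σ y ≤ Gp σ z + dist y z := by
  apply csSup_le (Gp_img_nonempty σ y)
  rintro a ⟨t, ht, rfl⟩
  exact (gp_middle _ _ _ _).trans (by linarith [le_Gp (σ := σ) ht z])

lemma Gp_ray (hσ : IsGeodesicRay σ) {s : ℝ} (hs : 0 ≤ s) : Gp σ (σ s) = s := by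
  apply le_antisymm
  · have := Gp_le_dist σ (σ s)
    rwa [ray_dist0 hσ hs] at this
  · have : gromovProd (σ 0) (σ s) (σ s) = s := by
      unfold gromovProd
      rw [dist_self, ray_dist0 hσ hs]
      ring
    have h2 := le_Gp (σ := σ) hs (σ s)
    rwa [this] at h2

lemma Gp_eq_liminf (hσ : IsGeodesicRay σ) (y : X) :
    Filter.liminf (fun t : ℝ => gromovProd (σ 0) y (σ t)) Filter.atTop = Gp σ y := by
  rw [Filter.liminf_eq]
  apply le_antisymm
  · refine csSup_le ⟨0, ?_⟩ ?_
    · show ∀ᶠ t in Filter.atTop, (0:ℝ) ≤ gromovProd (σ 0) y (σ t)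
      exact Filter.Eventually.of_forall fun t => gp_nonneg _ _ _
    intro a ha
    obtain ⟨t₀, h⟩ := Filter.eventually_atTop.mp ha
    exact (h (max t₀ 0) (le_max_left _ _)).trans (le_Gp (le_max_right _ _) y)
  · apply csSup_le (Gp_img_nonempty σ y)
    rintro a ⟨t, ht, rfl⟩
    refine le_csSup ⟨dist (σ 0) y, ?_⟩ ?_
    · intro b hb
      obtain ⟨t₀, h⟩ := Filter.eventually_atTop.mp hb
      exact (h (max t₀ 0) (le_max_left _ _)).trans (gp_le_left _ _ _)
    · show ∀ᶠ t' in Filter.atTop, gromovProd (σ 0) y (σ t) ≤ gromovProd (σ 0) y (σ t')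
      exact Filter.eventually_atTop.mpr ⟨t, fun t' htt' => gp_mono hσ ht htt' y⟩

lemma gromovFilter_eq (hσ : IsGeodesicRay σ) :
    gromovFilter σ = ⨅ M : ℝ, Filter.principal {x | M ≤ Gp σ x} := by
  unfold gromovFilter
  exact iInf_congr fun M => by
    congr 1
    ext x
    simp only [Set.mem_setOf_eq, Gp_eq_liminf hσ]

lemma mem_gromovFilter (hσ : IsGeodesicRay σ) {s : Set X} :
    s ∈ gromovFilter σ ↔ ∃ M : ℝ, ∀ y, M ≤ Gp σ y → y ∈ s := by
  rw [gromovFilter_eq hσ]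
  rw [Filter.mem_iInf_of_directed]
  · refine exists_congr fun M => ?_
    rw [Filter.mem_principal]
    constructor
    · intro h y hy
      exact h hy
    · intro h y hy
      exact h y hy
  · intro M₁ M₂
    refine ⟨max M₁ M₂, Filter.principal_mono.mpr ?_, Filter.principal_mono.mpr ?_⟩
    · intro y hy
      simp only [Set.mem_setOf_eq] at hy ⊢
      exact le_trans (le_max_left _ _) hy
    · intro y hy
      simp only [Set.mem_setOf_eq] at hy ⊢
      exact le_trans (le_max_right _ _) hy

lemma S_mem (hσ : IsGeodesicRay σ) (M : ℝ) : {y | M ≤ Gp σ y} ∈ gromovFilter σ :=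
  (mem_gromovFilter hσ).mpr ⟨M, fun _ hy => hy⟩

lemma tendsto_gromovFilter_iff (hσ : IsGeodesicRay σ) {ι : Type*} {l : Filter ι} {u : ι → X} :
    Filter.Tendsto u l (gromovFilter σ) ↔ ∀ M : ℝ, ∀ᶠ k in l, M ≤ Gp σ (u k) := by
  rw [gromovFilter_eq hσ, tendsto_iInf]
  exact forall_congr' fun M => by rw [tendsto_principal]; rfl

lemma dil_ev (hσ : IsGeodesicRay σ) {g : X → X} {l : ℝ}
    (hL : HasLogDilation (σ 0) σ g l) {a : ℝ} (ha : a < l) :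
    ∃ M, ∀ y, M ≤ Gp σ y → a ≤ dist y (σ 0) - dist (g y) (σ 0) := by
  unfold HasLogDilation logDilation at hL
  rw [Filter.liminf_eq] at hL
  have h1 : (a : EReal) <
      sSup {b : EReal | ∀ᶠ x in gromovFilter σ,
        b ≤ ((dist x (σ 0) - dist (g x) (σ 0) : ℝ) : EReal)} := by
    rw [hL]; exact EReal.coe_lt_coe_iff.mpr ha
  obtain ⟨b, hb, hab⟩ := lt_sSup_iff.mp h1
  obtain ⟨M, hM⟩ := (mem_gromovFilter hσ).mp (Filter.eventually_iff.mp hb)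
  refine ⟨M, fun y hy => ?_⟩
  have h2 : (a : EReal) ≤ ((dist y (σ 0) - dist (g y) (σ 0) : ℝ) : EReal) :=
    le_trans hab.le (hM y hy)
  exact_mod_cast h2

lemma dil_fr (hσ : IsGeodesicRay σ) {g : X → X} {l : ℝ}
    (hL : HasLogDilation (σ 0) σ g l) {ε : ℝ} (hε : 0 < ε) (M : ℝ) :
    ∃ y, M ≤ Gp σ y ∧ dist y (σ 0) - dist (g y) (σ 0) ≤ l + ε := by
  by_contra h
  push_neg at h
  have hev : ∀ᶠ x in gromovFilter σ,
      ((l + ε : ℝ) : EReal) ≤ ((dist x (σ 0) - dist (g x) (σ 0) : ℝ) : EReal) := by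
    filter_upwards [S_mem hσ M] with y hy
    exact_mod_cast (h y hy).le
  have h2 : ((l + ε : ℝ) : EReal) ≤ logDilation (σ 0) σ g := by
    unfold logDilation
    rw [Filter.liminf_eq]
    exact le_sSup hev
  rw [hL] at h2
  have := EReal.coe_le_coe_iff.mp h2
  linarith

end GpSec


section Hyp

variable {δ : ℝ}

lemma geo_dist_left {c : ℝ → X} {x y : X} (hc : IsGeodesicFromTo c x y) {r : ℝ}
    (hr : r ∈ Set.Icc 0 (dist x y)) : dist x (c r) = r := by
  have h := hc.2.2 0 r ⟨le_rfl, dist_nonneg⟩ hr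
  rw [hc.1] at h
  rw [h, abs_sub_comm, sub_zero, abs_of_nonneg hr.1]

lemma geo_dist_right {c : ℝ → X} {x y : X} (hc : IsGeodesicFromTo c x y) {r : ℝ}
    (hr : r ∈ Set.Icc 0 (dist x y)) : dist y (c r) = dist x y - r := by
  have h := hc.2.2 (dist x y) r ⟨dist_nonneg, le_rfl⟩ hr
  rw [hc.2.1] at h
  rw [h, abs_of_nonneg (by linarith [hr.2])]

lemma dist_ge_gp {c : ℝ → X} {x y : X} (hc : IsGeodesicFromTo c x y) {r : ℝ}
    (hr : r ∈ Set.Icc 0 (dist x y)) (w : X) : gromovProd w x y ≤ dist w (c r) := by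
  have h1 := dist_triangle w (c r) x
  have h2 := dist_triangle w (c r) y
  rw [dist_comm (c r) x, geo_dist_left hc hr] at h1
  rw [dist_comm (c r) y, geo_dist_right hc hr] at h2
  unfold gromovProd
  linarith

variable (hgeo : IsGeodesicSpace X) (hslim : IsDeltaHyperbolic X δ)
include hgeo hslim

lemma lemB {σ : ℝ → X} (hσ : IsGeodesicRay σ) {y : X} {s t : ℝ} (hs : 0 ≤ s) (hst : s ≤ t)
    (hgp : s ≤ gromovProd (σ 0) y (σ t)) : dist y (σ s) ≤ dist (σ 0) y - s + 2 * δ := by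
  have ht : 0 ≤ t := hs.trans hst
  obtain ⟨α, hα⟩ := hgeo (σ 0) y
  obtain ⟨β, hβ⟩ := hgeo y (σ t)
  have hseg := ray_seg hσ ht
  have hdist0t : dist (σ 0) (σ t) = t := ray_dist0 hσ ht
  obtain ⟨u, hu, hdu⟩ := hslim (σ 0) y (σ t) α β σ hα hβ hseg s ⟨hs, by rw [hdist0t]; exact hst⟩
  rcases hu with h | h
  · obtain ⟨r, hr, rfl⟩ := h
    have h1 : dist (σ 0) (α r) = r := geo_dist_left hα hr
    have h2 : dist y (α r) = dist (σ 0) y - r := geo_dist_right hα hr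
    have h3 : s ≤ r + δ := by
      have h4 := dist_triangle (σ 0) (α r) (σ s)
      rw [ray_dist0 hσ hs, h1] at h4
      rw [dist_comm (σ s) (α r)] at hdu
      linarith
    have h5 := dist_triangle y (α r) (σ s)
    rw [dist_comm (α r) (σ s)] at h5
    linarith
  · obtain ⟨r, hr, rfl⟩ := h
    have h1 : dist y (β r) = r := geo_dist_left hβ hr
    have h2 : dist (σ t) (β r) = dist y (σ t) - r := geo_dist_right hβ hr
    have h3 : dist (σ s) (σ t) = t - s := by
      rw [ray_dist hσ hs ht, abs_of_nonpos (by linarith)]; ring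
    have h4 : t - s ≤ (dist y (σ t) - r) + δ := by
      have h5 := dist_triangle (σ t) (β r) (σ s)
      rw [dist_comm (σ t) (σ s)] at h5
      rw [dist_comm (σ s) (β r)] at hdu
      linarith
    have h6 : s ≤ (dist (σ 0) y + t - dist y (σ t)) / 2 := by
      unfold gromovProd at hgp
      rw [hdist0t] at hgp
      exact hgp
    have h7 := dist_triangle y (β r) (σ s)
    rw [dist_comm (β r) (σ s)] at h7
    linarith

lemma four_pt (w x y z : X) :
    min (gromovProd w x z) (gromovProd w z y) - 3 * δ ≤ gromovProd w x y := by
  obtain ⟨c, hc⟩ := hgeo x y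
  set t₀ := gromovProd x y w with ht₀def
  have ht₀ : t₀ ∈ Set.Icc 0 (dist x y) := ⟨gp_nonneg _ _ _, gp_le_left _ _ _⟩
  have hxm : dist x (c t₀) = t₀ := geo_dist_left hc ht₀
  have hym : dist y (c t₀) = dist x y - t₀ := geo_dist_right hc ht₀
  -- Step A : dist w (c t₀) ≤ gromovProd w x y + 2δ
  have hA : dist w (c t₀) ≤ gromovProd w x y + 2 * δ := by
    obtain ⟨α, hα⟩ := hgeo x w
    obtain ⟨β, hβ⟩ := hgeo w y
    obtain ⟨u, hu, hdu⟩ := hslim x w y α β c hα hβ hc t₀ ht₀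
    rcases hu with h | h
    · obtain ⟨r, hr, rfl⟩ := h
      have h1 : dist x (α r) = r := geo_dist_left hα hr
      have h2 : dist w (α r) = dist x w - r := geo_dist_right hα hr
      have h3 : t₀ ≤ r + δ := by
        have h4 := dist_triangle x (α r) (c t₀)
        rw [h1, dist_comm (c t₀) (α r)] at *
        linarith [hxm, hdu, h4]
      have h5 := dist_triangle w (α r) (c t₀)
      rw [dist_comm (α r) (c t₀)] at h5
      have hexp : dist x w - t₀ = gromovProd w x y := by
        rw [ht₀def]
        unfold gromovProd
        rw [dist_comm x w, dist_comm y w, dist_comm w x]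
        ring
      linarith
    · obtain ⟨r, hr, rfl⟩ := h
      have h1 : dist w (β r) = r := geo_dist_left hβ hr
      have h2 : dist y (β r) = dist w y - r := geo_dist_right hβ hr
      have h3 : dist x y - t₀ ≤ (dist w y - r) + δ := by
        have h4 := dist_triangle y (β r) (c t₀)
        rw [h2, dist_comm (c t₀) (β r)] at *
        linarith [hym, hdu, h4]
      have h5 := dist_triangle w (β r) (c t₀)
      rw [dist_comm (β r) (c t₀)] at h5
      have hexp : dist w y - dist x y + t₀ = gromovProd w x y := by
        rw [ht₀def]
        unfold gromovProd
        rw [dist_comm x y, dist_comm y w, dist_comm w x]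
        ring
      linarith
  -- Step B : min ... - δ ≤ dist w (c t₀)
  have hB : min (gromovProd w x z) (gromovProd w z y) - δ ≤ dist w (c t₀) := by
    obtain ⟨α, hα⟩ := hgeo x z
    obtain ⟨β, hβ⟩ := hgeo z y
    obtain ⟨u, hu, hdu⟩ := hslim x z y α β c hα hβ hc t₀ ht₀
    rcases hu with h | h
    · obtain ⟨r, hr, rfl⟩ := h
      have h1 := dist_ge_gp hα hr w
      have h2 := dist_triangle w (c t₀) (α r)
      have := min_le_left (gromovProd w x z) (gromovProd w z y)
      linarith
    · obtain ⟨r, hr, rfl⟩ := h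
      have h1 := dist_ge_gp hβ hr w
      have h2 := dist_triangle w (c t₀) (β r)
      have := min_le_right (gromovProd w x z) (gromovProd w z y)
      linarith
  linarith

end Hyp

lemma nonexp_iter {f : X → X} (hf : Nonexpanding f) : ∀ n, Nonexpanding f^[n] := by
  intro n
  induction n with
  | zero => intro x y; simp
  | succ n ih =>
    intro x y
    rw [Function.iterate_succ_apply', Function.iterate_succ_apply']
    exact (hf _ _).trans (ih x y)


section MainCons

variable {δ : ℝ} {f : X → X} {γ : ℝ → X} {l : ℕ → ℝ}

lemma star_lemma (hgeo : IsGeodesicSpace X) (hslim : IsDeltaHyperbolic X δ)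
    (hray : IsGeodesicRay γ) {g : X → X} (hg : Nonexpanding g) {lg : ℝ}
    (hL : HasLogDilation (γ 0) γ g lg) {s : ℝ} (hs : 0 ≤ s) :
    s - lg - 2 * δ ≤ dist (γ 0) (g (γ s)) := by
  apply le_of_forall_pos_le_add
  intro ε hε
  obtain ⟨y, hGy, hdil⟩ := dil_fr hray hL hε (s + 1)
  obtain ⟨t, ht0, hgt⟩ := exists_gp_gt (show s < Gp γ y by linarith)
  have hst : s ≤ t := by
    have h := gp_le_right (γ 0) y (γ t)
    rw [ray_dist0 hray ht0] at h
    linarith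
  have hB := lemB hgeo hslim hray hs hst (le_of_lt hgt)
  have h1 := dist_triangle (γ 0) (g (γ s)) (g y)
  have h2 : dist (g (γ s)) (g y) ≤ dist y (γ s) := by
    have := hg (γ s) y
    rwa [dist_comm (γ s) y] at this
  rw [dist_comm y (γ 0), dist_comm (g y) (γ 0)] at hdil
  linarith

lemma starstar_lemma (hray : IsGeodesicRay γ) {g : X → X} {lg : ℝ}
    (hL : HasLogDilation (γ 0) γ g lg) :
    ∃ M, 0 ≤ M ∧ ∀ s, M ≤ s → dist (γ 0) (g (γ s)) ≤ s - lg + 1 := by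
  obtain ⟨M, hM⟩ := dil_ev hray hL (show lg - 1 < lg by linarith)
  refine ⟨max M 0, le_max_right _ _, fun s hs => ?_⟩
  have hs0 : (0:ℝ) ≤ s := le_trans (le_max_right _ _) hs
  have hGp : M ≤ Gp γ (γ s) := by
    rw [Gp_ray hray hs0]
    exact le_trans (le_max_left _ _) hs
  have h := hM (γ s) hGp
  rw [dist_comm (γ s) (γ 0), ray_dist0 hray hs0, dist_comm (g (γ s)) (γ 0)] at h
  linarith

lemma trio_lemma (hδ : 0 ≤ δ) (hgeo : IsGeodesicSpace X) (hslim : IsDeltaHyperbolic X δ)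
    (hf : Nonexpanding f) (hray : IsGeodesicRay γ) (hGL : HasGeodesicLimitAt f γ γ)
    (hl : ∀ n, 1 ≤ n → HasLogDilation (γ 0) γ f^[n] (l n)) :
    ∀ n : ℕ,
      Filter.Tendsto (fun k : ℕ => f^[n] (γ k)) Filter.atTop (gromovFilter γ) ∧
      (∀ u : ℝ, 0 ≤ u →
        u - (if n = 0 then 0 else l n) - (5 * δ + 2) ≤ Gp γ (f^[n] (γ u))) ∧
      (∃ S, 0 ≤ S ∧ ∀ s, S ≤ s → ∃ v, 0 ≤ v ∧
        dist (f^[n] (γ s)) (γ v) < 7 * δ + 5 ∧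
        dist (γ 0) (f^[n] (γ s)) - (7 * δ + 5) ≤ v ∧
        v ≤ dist (γ 0) (f^[n] (γ s))) := by
  intro n
  induction n with
  | zero =>
    simp only [Function.iterate_zero, id_eq, if_true, eq_self_iff_true]
    refine ⟨?_, ?_, ?_⟩
    · rw [tendsto_gromovFilter_iff hray]
      intro M
      obtain ⟨N, hN⟩ := exists_nat_ge M
      filter_upwards [Filter.eventually_ge_atTop N] with k hk
      rw [Gp_ray hray (Nat.cast_nonneg k)]
      exact hN.trans (Nat.cast_le.mpr hk)
    · intro u hu
      rw [Gp_ray hray hu]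
      linarith
    · refine ⟨0, le_rfl, fun s hs => ⟨s, hs, ?_, ?_, ?_⟩⟩
      · rw [dist_self]; linarith
      · rw [ray_dist0 hray hs]; linarith
      · rw [ray_dist0 hray hs]
  | succ n ih =>
    obtain ⟨hP, hQ, S, hS0, hTRK⟩ := ih
    have hRspos : (0:ℝ) < 7 * δ + 5 := by linarith
    obtain ⟨N, hN⟩ := exists_nat_ge S
    set x : ℕ → X := fun k => if k < N then γ 0 else f^[n] (γ k) with hx
    have hreg : ∀ k, InGeodesicRegion γ (7 * δ + 5) (x k) := by
      intro k
      by_cases h : k < N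
      · refine ⟨0, le_rfl, ?_⟩
        simp only [hx, if_pos h, dist_self]
        linarith
      · push_neg at h
        have hks : S ≤ (k:ℝ) := le_trans hN (Nat.cast_le.mpr h)
        obtain ⟨v, hv0, hvd, _, _⟩ := hTRK k hks
        refine ⟨v, hv0, ?_⟩
        simp only [hx, if_neg (Nat.not_lt.mpr h)]
        exact hvd
    have heq : ∀ᶠ k : ℕ in Filter.atTop, f^[n] (γ (k:ℝ)) = x k := by
      filter_upwards [Filter.eventually_ge_atTop N] with k hk
      simp only [hx, if_neg (Nat.not_lt.mpr hk)]
    have htend : Filter.Tendsto x Filter.atTop (gromovFilter γ) := hP.congr' heq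
    have happ := hGL γ hray ⟨0, fun t _ => by rw [dist_self]⟩ (7 * δ + 5) hRspos x hreg htend
    have hP1 : Filter.Tendsto (fun k : ℕ => f^[n+1] (γ k)) Filter.atTop (gromovFilter γ) := by
      apply happ.congr'
      filter_upwards [Filter.eventually_ge_atTop N] with k hk
      simp only [hx, if_neg (Nat.not_lt.mpr hk)]
      exact (Function.iterate_succ_apply' f n (γ k)).symm
    have hln1 := hl (n+1) (Nat.le_add_left 1 n)
    have hne1 := nonexp_iter hf (n+1)
    have hQ1 : ∀ u : ℝ, 0 ≤ u →
        u - l (n+1) - (5 * δ + 2) ≤ Gp γ (f^[n+1] (γ u)) := by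
      intro u hu
      have h1 : ∀ᶠ k : ℕ in Filter.atTop, u - l (n+1) ≤ Gp γ (f^[n+1] (γ k)) :=
        (tendsto_gromovFilter_iff hray).mp hP1 (u - l (n+1))
      obtain ⟨Nu, hNu⟩ := exists_nat_ge u
      obtain ⟨k₀, hk₀T, hk₀u⟩ := (h1.and (Filter.eventually_ge_atTop Nu)).exists
      have hk₀u' : u ≤ (k₀:ℝ) := le_trans hNu (Nat.cast_le.mpr hk₀u)
      obtain ⟨t₁, ht₁0, hgpt₁⟩ :=
        exists_gp_gt (show u - l (n+1) - 1 < Gp γ (f^[n+1] (γ k₀)) by linarith)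
      have h4 := four_pt hgeo hslim (γ 0) (f^[n+1] (γ u)) (γ t₁) (f^[n+1] (γ k₀))
      have hs1 := star_lemma hgeo hslim hray hne1 hln1 hu
      have hs2 := star_lemma hgeo hslim hray hne1 hln1 (Nat.cast_nonneg k₀)
      have hd12 : dist (f^[n+1] (γ u)) (f^[n+1] (γ k₀)) ≤ (k₀:ℝ) - u := by
        have h5 := hne1 (γ u) (γ k₀)
        rw [ray_dist hray hu (Nat.cast_nonneg k₀), abs_of_nonpos (by linarith)] at h5
        linarith
      have hgpz : u - l (n+1) - 2*δ ≤
          gromovProd (γ 0) (f^[n+1] (γ u)) (f^[n+1] (γ k₀)) := by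
        unfold gromovProd
        linarith
      have hmin : u - l (n+1) - 2*δ - 1 ≤
          min (gromovProd (γ 0) (f^[n+1] (γ u)) (f^[n+1] (γ k₀)))
            (gromovProd (γ 0) (f^[n+1] (γ k₀)) (γ t₁)) :=
        le_min (by linarith) (by linarith)
      have h6 := le_Gp (σ := γ) ht₁0 (f^[n+1] (γ u))
      linarith
    refine ⟨hP1, ?_, ?_⟩
    · intro u hu
      have := hQ1 u hu
      simpa only [Nat.succ_ne_zero, if_neg, ↓reduceIte] using this
    · obtain ⟨M₁, hM₁0, hM₁⟩ := starstar_lemma hray hln1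
      refine ⟨max M₁ (l (n+1) + (5 * δ + 2) + 1), le_trans hM₁0 (le_max_left _ _),
        fun s hs => ?_⟩
      have hsM₁ : M₁ ≤ s := le_trans (le_max_left _ _) hs
      have hsK : l (n+1) + (5 * δ + 2) + 1 ≤ s := le_trans (le_max_right _ _) hs
      have hs0 : 0 ≤ s := le_trans hM₁0 hsM₁
      have hD : dist (γ 0) (f^[n+1] (γ s)) ≤ s - l (n+1) + 1 := hM₁ s hsM₁
      have hGs : s - l (n+1) - (5 * δ + 2) ≤ Gp γ (f^[n+1] (γ s)) := hQ1 s hs0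
      have hv0 : 0 ≤ Gp γ (f^[n+1] (γ s)) - 1 := by linarith
      obtain ⟨t₂, ht₂0, hgt₂⟩ := exists_gp_gt
        (show Gp γ (f^[n+1] (γ s)) - 1 < Gp γ (f^[n+1] (γ s)) by linarith)
      have hvt₂ : Gp γ (f^[n+1] (γ s)) - 1 ≤ t₂ := by
        have h7 := gp_le_right (γ 0) (f^[n+1] (γ s)) (γ t₂)
        rw [ray_dist0 hray ht₂0] at h7
        linarith
      have hBB := lemB hgeo hslim hray hv0 hvt₂ (le_of_lt hgt₂)
      have hle := Gp_le_dist γ (f^[n+1] (γ s))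
      refine ⟨Gp γ (f^[n+1] (γ s)) - 1, hv0, ?_, ?_, ?_⟩
      · calc dist (f^[n+1] (γ s)) (γ (Gp γ (f^[n+1] (γ s)) - 1))
            ≤ dist (γ 0) (f^[n+1] (γ s)) - (Gp γ (f^[n+1] (γ s)) - 1) + 2*δ := hBB
          _ < 7 * δ + 5 := by linarith
      · linarith
      · linarith

end MainCons


lemma divergence_exists {f : X → X} (hf : Nonexpanding f) (p : X) :
    ∃ c : ℝ, 0 ≤ c ∧ HasDivergenceRate f c ∧
      Filter.Tendsto (fun n : ℕ => dist p (f^[n] p) / n) Filter.atTop (nhds c) := by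
  set u : ℕ → ℝ := fun n => dist p (f^[n] p) with hu
  have hsub : Subadditive u := by
    intro m n
    have h1 := dist_triangle p (f^[m] p) (f^[m] (f^[n] p))
    have h2 : dist (f^[m] p) (f^[m] (f^[n] p)) ≤ dist p (f^[n] p) := nonexp_iter hf m _ _
    simp only [hu]
    rw [Function.iterate_add_apply]
    linarith
  have hbdd : BddBelow (Set.range fun n : ℕ => u n / n) := by
    refine ⟨0, ?_⟩
    rintro r ⟨n, rfl⟩
    exact div_nonneg dist_nonneg (Nat.cast_nonneg n)
  have hlim := hsub.tendsto_lim hbdd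
  refine ⟨hsub.lim, ?_, ?_, hlim⟩
  · exact le_of_tendsto_of_tendsto' tendsto_const_nhds hlim
      (fun n => div_nonneg dist_nonneg (Nat.cast_nonneg n))
  · intro x
    have hb : ∀ n : ℕ, u n - 2 * dist x p ≤ dist x (f^[n] x) ∧
        dist x (f^[n] x) ≤ u n + 2 * dist x p := by
      intro n
      have h1 := dist_triangle x p (f^[n] p)
      have h2 : dist (f^[n] p) (f^[n] x) ≤ dist p x := nonexp_iter hf n _ _
      have h3 := dist_triangle x (f^[n] p) (f^[n] x)
      have h4 := dist_triangle p x (f^[n] x)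
      have h5 : dist (f^[n] x) (f^[n] p) ≤ dist x p := nonexp_iter hf n _ _
      have h6 := dist_triangle x (f^[n] x) (f^[n] p)
      have h7 := dist_triangle p (f^[n] p) (f^[n] x)  -- not needed maybe
      constructor
      · -- u n ≤ dist p x + dist x (f^[n] x) + dist (f^[n] x) (f^[n] p)
        have h8 := dist_triangle p x (f^[n] p)
        have h9 := dist_triangle x (f^[n] x) (f^[n] p)
        simp only [hu]
        rw [dist_comm x p] at *
        linarith
      · simp only [hu]
        rw [dist_comm x p] at *
        linarith
    have hlow : Filter.Tendsto (fun n : ℕ => u n / n - (2 * dist x p) / n)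
        Filter.atTop (nhds (hsub.lim - 0)) :=
      hlim.sub (tendsto_const_div_atTop_nhds_zero_nat (2 * dist x p))
    have hhigh : Filter.Tendsto (fun n : ℕ => u n / n + (2 * dist x p) / n)
        Filter.atTop (nhds (hsub.lim + 0)) :=
      hlim.add (tendsto_const_div_atTop_nhds_zero_nat (2 * dist x p))
    rw [sub_zero] at hlow
    rw [add_zero] at hhigh
    apply tendsto_of_tendsto_of_tendsto_of_le_of_le' hlow hhigh
    · filter_upwards [Filter.eventually_ge_atTop 1] with n hn
      have hnpos : (0:ℝ) < n := by exact_mod_cast hn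
      rw [← sub_div]
      exact div_le_div_of_nonneg_right ((hb n).1) hnpos.le
    · filter_upwards [Filter.eventually_ge_atTop 1] with n hn
      have hnpos : (0:ℝ) < n := by exact_mod_cast hn
      rw [← add_div]
      exact div_le_div_of_nonneg_right ((hb n).2) hnpos.le


lemma dilation_upper_bound {δ : ℝ} {f : X → X} {γ : ℝ → X} {l : ℕ → ℝ}
    (hδ : 0 ≤ δ) (hgeo : IsGeodesicSpace X) (hslim : IsDeltaHyperbolic X δ)
    (hf : Nonexpanding f) (hray : IsGeodesicRay γ) (hGL : HasGeodesicLimitAt f γ γ)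
    (hl : ∀ n, 1 ≤ n → HasLogDilation (γ 0) γ f^[n] (l n)) {L : ℝ}
    (hlim : Filter.Tendsto (fun n : ℕ => l n / n) Filter.atTop (nhds L)) (hLle : L ≤ 0) :
    ∀ n, 1 ≤ n → l n ≤ 9 * δ + 6 := by
  have htrio := trio_lemma hδ hgeo hslim hf hray hGL hl
  set Rs : ℝ := 7 * δ + 5 with hRs
  set SD : ℕ → Set ℝ :=
    fun n => {a : ℝ | ∀ᶠ s : ℕ in Filter.atTop, a ≤ (s:ℝ) - dist (γ 0) (f^[n] (γ s))}
    with hSD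
  set Lam : ℕ → ℝ := fun n => sSup (SD n) with hLam
  have hstar : ∀ n, 1 ≤ n → ∀ s : ℝ, 0 ≤ s →
      s - l n - 2*δ ≤ dist (γ 0) (f^[n] (γ s)) :=
    fun n hn s hs => star_lemma hgeo hslim hray (nonexp_iter hf n) (hl n hn) hs
  have hSD_bdd : ∀ n, 1 ≤ n → ∀ a ∈ SD n, a ≤ l n + 2*δ := by
    intro n hn a ha
    obtain ⟨s₀, h⟩ := Filter.eventually_atTop.mp ha
    have h2 := h s₀ le_rfl
    have h3 := hstar n hn s₀ (Nat.cast_nonneg s₀)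
    linarith
  have hSD_bddAbove : ∀ n, 1 ≤ n → BddAbove (SD n) :=
    fun n hn => ⟨l n + 2*δ, fun a ha => hSD_bdd n hn a ha⟩
  have hSD_ne : ∀ n, 1 ≤ n → (l n - 1) ∈ SD n := by
    intro n hn
    obtain ⟨M, hM0, hM⟩ := starstar_lemma hray (hl n hn)
    obtain ⟨N, hN⟩ := exists_nat_ge M
    refine Filter.eventually_atTop.mpr ⟨N, fun s hs => ?_⟩
    have := hM s (le_trans hN (Nat.cast_le.mpr hs))
    linarith
  have hLam_le : ∀ n, 1 ≤ n → Lam n ≤ l n + 2*δ :=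
    fun n hn => csSup_le ⟨l n - 1, hSD_ne n hn⟩ (hSD_bdd n hn)
  have hLam_ge : ∀ n, 1 ≤ n → l n - 1 ≤ Lam n :=
    fun n hn => le_csSup (hSD_bddAbove n hn) (hSD_ne n hn)
  have hl_le_Lam : ∀ n, 1 ≤ n → l n ≤ Lam n := by
    intro n hn
    by_contra h
    push_neg at h
    obtain ⟨M, hM⟩ := dil_ev hray (hl n hn) (show (Lam n + l n)/2 < l n by linarith)
    obtain ⟨N, hN⟩ := exists_nat_ge (max M 0)
    have hmem : (Lam n + l n)/2 ∈ SD n := by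
      refine Filter.eventually_atTop.mpr ⟨N, fun s hs => ?_⟩
      have hs0 : (0:ℝ) ≤ (s:ℝ) := Nat.cast_nonneg s
      have hsM : M ≤ Gp γ (γ (s:ℝ)) := by
        rw [Gp_ray hray hs0]
        exact le_trans ((le_max_left M 0).trans hN) (Nat.cast_le.mpr hs)
      have h2 := hM (γ (s:ℝ)) hsM
      rw [dist_comm (γ (s:ℝ)) (γ 0), ray_dist0 hray hs0,
        dist_comm (f^[n] (γ (s:ℝ))) (γ 0)] at h2
      linarith
    have := le_csSup (hSD_bddAbove n hn) hmem
    linarith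
  have hsuper : ∀ n m, 1 ≤ n → 1 ≤ m → Lam n + l m - (Rs + 1) ≤ Lam (n + m) := by
    intro n m hn hm
    obtain ⟨-, -, S, hS0, hTRK⟩ := htrio n
    obtain ⟨M₂, hM₂0, hM₂⟩ := starstar_lemma hray (hl m hm)
    have hpt : ∀ s : ℝ, max S (M₂ + l n + 2*δ + Rs) ≤ s →
        (s - dist (γ 0) (f^[n] (γ s))) + (l m - 1 - Rs) ≤
          s - dist (γ 0) (f^[n+m] (γ s)) := by
      intro s hs
      have hsS : S ≤ s := le_trans (le_max_left _ _) hs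
      have hs2 : M₂ + l n + 2*δ + Rs ≤ s := le_trans (le_max_right _ _) hs
      have hs0 : 0 ≤ s := le_trans hS0 hsS
      obtain ⟨v, hv0, hvd, hvlow, hvup⟩ := hTRK s hsS
      have hvM₂ : M₂ ≤ v := by
        have := hstar n hn s hs0
        linarith
      have hDm := hM₂ v hvM₂
      have hiter : f^[n+m] (γ s) = f^[m] (f^[n] (γ s)) := by
        rw [Nat.add_comm n m]
        exact Function.iterate_add_apply f m n (γ s)
      have htri := dist_triangle (γ 0) (f^[m] (γ v)) (f^[m] (f^[n] (γ s)))
      have hne : dist (f^[m] (γ v)) (f^[m] (f^[n] (γ s))) ≤ dist (γ v) (f^[n] (γ s)) :=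
        nonexp_iter hf m _ _
      rw [dist_comm (γ v) (f^[n] (γ s))] at hne
      rw [hiter]
      linarith [le_of_lt hvd]
    have hnm : 1 ≤ n + m := le_trans hn (Nat.le_add_right n m)
    have hstep : ∀ a ∈ SD n, a ≤ Lam (n+m) - (l m - 1 - Rs) := by
      intro a ha
      have hmem2 : a + (l m - 1 - Rs) ∈ SD (n+m) := by
        obtain ⟨N₁, hN₁⟩ := Filter.eventually_atTop.mp ha
        obtain ⟨N₂, hN₂⟩ := exists_nat_ge (max S (M₂ + l n + 2*δ + Rs))
        refine Filter.eventually_atTop.mpr ⟨max N₁ N₂, fun s hs => ?_⟩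
        have h1 := hN₁ s (le_trans (le_max_left _ _) hs)
        have h2 := hpt s (le_trans hN₂ (Nat.cast_le.mpr (le_trans (le_max_right _ _) hs)))
        linarith
      have := le_csSup (hSD_bddAbove (n+m) hnm) hmem2
      linarith
    have := csSup_le ⟨l n - 1, hSD_ne n hn⟩ hstep
    linarith
  set C0 : ℝ := Rs + 1 + 2*δ with hC0
  have hC0nn : 0 ≤ C0 := by rw [hC0, hRs]; linarith
  set r : ℕ → ℝ := fun k => if k = 0 then C0 else C0 - Lam k with hr
  have hrsub : Subadditive r := by
    intro a b
    rcases Nat.eq_zero_or_pos a with ha | ha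
    · subst ha
      simp only [hr, Nat.zero_add, if_pos rfl]
      linarith
    · rcases Nat.eq_zero_or_pos b with hb | hb
      · subst hb
        simp only [hr, Nat.add_zero, if_pos rfl]
        linarith
      · have ha' : a ≠ 0 := Nat.pos_iff_ne_zero.mp ha
        have hb' : b ≠ 0 := Nat.pos_iff_ne_zero.mp hb
        have hab' : a + b ≠ 0 := by positivity
        simp only [hr, if_neg ha', if_neg hb', if_neg hab']
        have hs := hsuper a b ha hb
        have h2 := hLam_le b hb
        linarith
  have hLamlim : Filter.Tendsto (fun k : ℕ => Lam k / k) Filter.atTop (nhds L) := by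
    have hlo : Filter.Tendsto (fun k : ℕ => l k / k - 1 / k) Filter.atTop (nhds (L - 0)) :=
      hlim.sub (tendsto_const_div_atTop_nhds_zero_nat 1)
    have hhi : Filter.Tendsto (fun k : ℕ => l k / k + (2*δ) / k) Filter.atTop
        (nhds (L + 0)) := hlim.add (tendsto_const_div_atTop_nhds_zero_nat (2*δ))
    rw [sub_zero] at hlo
    rw [add_zero] at hhi
    apply tendsto_of_tendsto_of_tendsto_of_le_of_le' hlo hhi
    · filter_upwards [Filter.eventually_ge_atTop 1] with k hk
      have hkpos : (0:ℝ) < k := by exact_mod_cast hk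
      rw [← sub_div]
      exact div_le_div_of_nonneg_right (hLam_ge k hk) hkpos.le
    · filter_upwards [Filter.eventually_ge_atTop 1] with k hk
      have hkpos : (0:ℝ) < k := by exact_mod_cast hk
      rw [← add_div]
      exact div_le_div_of_nonneg_right (hLam_le k hk) hkpos.le
  have hrlim : Filter.Tendsto (fun k : ℕ => r k / k) Filter.atTop (nhds (-L)) := by
    have h1 : Filter.Tendsto (fun k : ℕ => C0 / k - Lam k / k) Filter.atTop
        (nhds (0 - L)) := (tendsto_const_div_atTop_nhds_zero_nat C0).sub hLamlim
    rw [zero_sub] at h1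
    apply h1.congr'
    filter_upwards [Filter.eventually_ge_atTop 1] with k hk
    have hk' : k ≠ 0 := Nat.pos_iff_ne_zero.mp hk
    simp only [hr, if_neg hk']
    rw [sub_div]
  have hbddB : BddBelow (Set.range fun k : ℕ => r k / k) := hrlim.bddBelow_range
  have htl := hrsub.tendsto_lim hbddB
  have hlimeq : hrsub.lim = -L := tendsto_nhds_unique htl hrlim
  intro n hn
  have h1 : hrsub.lim ≤ r n / n := by
    rw [Subadditive.lim]
    apply csInf_le
    · exact BddBelow.mono (Set.image_subset_range _ _) hbddB
    · exact ⟨n, Set.mem_Ici.mpr hn, rfl⟩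
  rw [hlimeq] at h1
  have hnpos : (0:ℝ) < n := by exact_mod_cast hn
  have h2 : -L * n ≤ r n := by
    have h3 := (le_div_iff₀ hnpos).mp h1
    linarith
  have h3 : r n = C0 - Lam n := by
    simp [hr, Nat.pos_iff_ne_zero.mp hn]
  have h5 : L * n ≤ 0 := mul_nonpos_iff.mpr (Or.inr ⟨hLle, hnpos.le⟩)
  have h6 := hl_le_Lam n hn
  have : Lam n ≤ C0 + L * n := by
    rw [h3] at h2
    nlinarith
  rw [hC0, hRs] at this
  linarith


lemma rays_asymp {δ : ℝ} {γ ζ : ℝ → X} (hδ : 0 ≤ δ)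
    (hgeo : IsGeodesicSpace X) (hslim : IsDeltaHyperbolic X δ)
    (hγ : IsGeodesicRay γ) (hζ : IsGeodesicRay ζ)
    (H : ∀ K : ℝ, ∃ U, 0 ≤ U ∧ ∀ u, U ≤ u → ∀ v, U ≤ v →
      K ≤ gromovProd (γ 0) (γ u) (ζ v)) :
    ∃ C : ℝ, ∀ t : ℝ, 0 ≤ t → dist (ζ t) (γ t) ≤ C := by
  set p := γ 0 with hp
  set q := ζ 0 with hq
  refine ⟨3 * dist p q + 6 * δ + 5, fun t ht => ?_⟩
  by_cases hts : t ≤ dist p q + δ + 1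
  · have h1 := dist_triangle (ζ t) q p
    have h2 := dist_triangle (ζ t) p (γ t)
    have h3 : dist (ζ t) q = t := by
      rw [dist_comm]; exact ray_dist0 hζ ht
    have h4 : dist p (γ t) = t := ray_dist0 hγ ht
    have h5 := dist_triangle (ζ t) q (γ t)
    have h6 := dist_triangle q p (γ t)
    rw [dist_comm q p] at h6
    linarith
  · push_neg at hts
    obtain ⟨U, hU0, hH⟩ := H (t + dist p q + 2*δ + 2)
    set T := max U t with hT
    have hUT : U ≤ T := le_max_left _ _
    have htT : t ≤ T := le_max_right _ _
    have hT0 : 0 ≤ T := le_trans hU0 hUT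
    have hgpK : t + dist p q + 2*δ + 2 ≤ gromovProd p (γ T) (ζ T) := hH T hUT T hUT
    obtain ⟨ζ', hζ'⟩ := hgeo p (ζ T)
    -- Claim 1
    obtain ⟨α, hα⟩ := hgeo q p
    have hζseg : IsGeodesicFromTo ζ q (ζ T) := ray_seg hζ hT0
    have hqd : dist q (ζ T) = T := ray_dist0 hζ hT0
    obtain ⟨w₀, hw₀, hd₀⟩ := hslim q p (ζ T) α ζ' ζ hα hζ' hζseg t ⟨ht, by rw [hqd]; exact htT⟩
    rcases hw₀ with h | h
    · exfalso
      obtain ⟨r, hr, rfl⟩ := h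
      have h1 : dist q (α r) = r := geo_dist_left hα hr
      have h2 := dist_triangle q (α r) (ζ t)
      have h3 : dist q (ζ t) = t := ray_dist0 hζ ht
      rw [dist_comm (α r) (ζ t)] at h2
      have h4 := hr.2
      have h5 : dist q p = dist p q := dist_comm q p
      linarith
    obtain ⟨r, hr, rfl⟩ := h
    -- hd₀ : dist (ζ t) (ζ' r) ≤ δ
    have hpr : dist p (ζ' r) = r := geo_dist_left hζ' hr
    have hrub : r ≤ t + dist p q + δ := by
      have h1 := dist_triangle p (ζ t) (ζ' r)
      have h2 := dist_triangle p q (ζ t)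
      have h3 : dist q (ζ t) = t := ray_dist0 hζ ht
      linarith
    -- |r − t| control (lower side)
    have hrlb : t - dist p q - δ ≤ r := by
      have h1 := dist_triangle q (ζ' r) (ζ t)
      have h2 := dist_triangle q p (ζ' r)
      have h3 : dist q (ζ t) = t := ray_dist0 hζ ht
      have h4 : dist (ζ' r) (ζ t) = dist (ζ t) (ζ' r) := dist_comm _ _
      have h5 : dist q p = dist p q := dist_comm q p
      linarith
    -- Claim 2
    obtain ⟨μ, hμ⟩ := hgeo (γ T) (ζ T)
    have hγseg : IsGeodesicFromTo γ p (γ T) := ray_seg hγ hT0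
    obtain ⟨w₁, hw₁, hd₁⟩ := hslim p (γ T) (ζ T) γ μ ζ' hγseg hμ hζ' r hr
    rcases hw₁ with h | h
    swap
    · exfalso
      obtain ⟨r₂, hr₂, rfl⟩ := h
      have h1 := dist_ge_gp hμ hr₂ p
      have h2 := dist_triangle p (ζ' r) (μ r₂)
      linarith
    obtain ⟨r', hr', rfl⟩ := h
    -- hd₁ : dist (ζ' r) (γ r') ≤ δ
    have hr'0 : 0 ≤ r' := hr'.1
    have hpr' : dist p (γ r') = r' := geo_dist_left hγseg hr'
    have hrr' : |r' - r| ≤ δ := by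
      have h1 := dist_triangle p (ζ' r) (γ r')
      have h2 := dist_triangle p (γ r') (ζ' r)
      have h3 : dist (γ r') (ζ' r) = dist (ζ' r) (γ r') := dist_comm _ _
      rw [abs_le]
      constructor
      · linarith
      · linarith
    have hfin : dist (γ r') (γ t) = |r' - t| := ray_dist hγ hr'0 ht
    have h1 := dist_triangle (ζ t) (ζ' r) (γ t)
    have h2 := dist_triangle (ζ' r) (γ r') (γ t)
    have habs : |r' - t| ≤ dist p q + 2*δ := by
      rw [abs_le]
      rw [abs_le] at hrr'
      constructor <;> [linarith [hrr'.1]; linarith [hrr'.2]]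
    rw [hfin] at h2
    have habs' : dist (γ r') (γ t) ≤ dist p q + 2*δ := by rw [hfin]; exact habs
    linarith


end BRFPAux

/-- **Proposition (BRFPs with stable dilation at most one).**
Let `X` be a proper geodesic Gromov hyperbolic metric space and `f : X → X` non-expanding.
(i) If a BRFP `η = [γ]` of `f` has stable dilation `Λ_η < 1` (i.e. `log Λ_η < 0`), then
`f` is hyperbolic (non-elliptic with positive divergence rate) and `η` is its
Denjoy–Wolff point.
(ii) If `f` is non-elliptic with Denjoy–Wolff point `ζ`, then the only BRFP `η` of `f`
with `Λ_η ≤ 1` is `ζ`. -/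
theorem BRFP_small_stable_dilation
    {X : Type*} [MetricSpace X] [ProperSpace X]
    (hgeo : IsGeodesicSpace X) (hhyp : GromovHyperbolic X)
    (f : X → X) (hf : Nonexpanding f) :
    (∀ (γ : ℝ → X) (L : ℝ), IsBRFP f γ → HasStableLogDilation (γ 0) γ f L → L < 0 →
      ¬ IsElliptic f ∧ (∃ c : ℝ, 0 < c ∧ HasDivergenceRate f c) ∧ IsDenjoyWolffPt f γ) ∧
    (¬ IsElliptic f → ∀ ζ : ℝ → X, IsDenjoyWolffPt f ζ →
      ∀ (γ : ℝ → X) (L : ℝ), IsBRFP f γ → HasStableLogDilation (γ 0) γ f L → L ≤ 0 →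
        AsympRays ζ γ) := by
  obtain ⟨δ, hδ, hslim⟩ := hhyp
  open Filter BRFPAux in
  constructor
  · -- Part (i)
    intro γ L hbrfp hstab hL
    obtain ⟨hray, hnetop, hGL⟩ := hbrfp
    obtain ⟨l, hl, hlim⟩ := hstab
    have htrio := trio_lemma hδ hgeo hslim hf hray hGL hl
    obtain ⟨c, hc0, hcdiv, hclim⟩ := divergence_exists hf (γ 0)
    have hcL : -L ≤ c := by
      have h1 : Filter.Tendsto (fun n : ℕ => (-(l n) - 2*δ)/n) Filter.atTop (nhds (-L)) := by
        have h2 : Filter.Tendsto (fun n : ℕ => -(l n / n) - (2*δ)/n) Filter.atTop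
            (nhds (-L - 0)) := (hlim.neg).sub (tendsto_const_div_atTop_nhds_zero_nat (2*δ))
        rw [sub_zero] at h2
        apply h2.congr
        intro n
        rw [← neg_div, ← sub_div]
      apply le_of_tendsto_of_tendsto h1 hclim
      filter_upwards [Filter.eventually_ge_atTop 1] with n hn
      have hnpos : (0:ℝ) < n := by exact_mod_cast hn
      have hstar := star_lemma hgeo hslim hray (nonexp_iter hf n) (hl n hn) (le_refl (0:ℝ))
      exact div_le_div_of_nonneg_right (by linarith) hnpos.le
    have hcpos : 0 < c := lt_of_lt_of_le (by linarith : (0:ℝ) < -L) hcL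
    refine ⟨?_, ⟨c, hcpos, hcdiv⟩, hray, ?_⟩
    · rintro ⟨x, hb⟩
      obtain ⟨C, hC⟩ := Metric.isBounded_iff.mp hb
      have hx0 : x ∈ Set.range (fun n : ℕ => f^[n] x) := ⟨0, by simp⟩
      have hCb : ∀ n : ℕ, dist x (f^[n] x) ≤ C := fun n => hC hx0 ⟨n, rfl⟩
      have h0 : Filter.Tendsto (fun n : ℕ => dist x (f^[n] x) / n) Filter.atTop (nhds 0) := by
        apply tendsto_of_tendsto_of_tendsto_of_le_of_le' tendsto_const_nhds
          (tendsto_const_div_atTop_nhds_zero_nat C)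
        · exact Filter.Eventually.of_forall fun n => div_nonneg dist_nonneg (Nat.cast_nonneg n)
        · exact Filter.Eventually.of_forall fun n =>
            div_le_div_of_nonneg_right (hCb n) (Nat.cast_nonneg n)
      exact absurd (tendsto_nhds_unique (hcdiv x) h0) (ne_of_gt hcpos)
    · intro x
      rw [tendsto_gromovFilter_iff hray]
      intro M
      have hev : ∀ᶠ n : ℕ in Filter.atTop, M + dist x (γ 0) + (5*δ+2) ≤ -(l n) := by
        have h1 : Filter.Tendsto (fun n : ℕ => (n:ℝ) * (-L/2)) Filter.atTop Filter.atTop :=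
          Filter.Tendsto.atTop_mul_const (by linarith) tendsto_natCast_atTop_atTop
        filter_upwards [h1.eventually_ge_atTop (M + dist x (γ 0) + (5*δ+2)),
          hlim.eventually_le_const (show L < L/2 by linarith),
          Filter.eventually_ge_atTop 1] with n hna hnb hn1
        have hnpos : (0:ℝ) < n := by exact_mod_cast hn1
        have h2 : l n ≤ (n:ℝ) * (L/2) := by
          have h3 := (div_le_iff₀ hnpos).mp hnb
          linarith
        have h4 : (n:ℝ) * (-L/2) = -((n:ℝ)*(L/2)) := by ring
        rw [h4] at hna
        linarith
      filter_upwards [hev, Filter.eventually_ge_atTop 1] with n hn hn1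
      have hQn := (htrio n).2.1 0 le_rfl
      rw [if_neg (Nat.one_le_iff_ne_zero.mp hn1)] at hQn
      have hkey : Gp γ (f^[n] (γ 0)) - dist x (γ 0) ≤ Gp γ (f^[n] x) := by
        have h := Gp_lip γ (f^[n] (γ 0)) (f^[n] x)
        have h2 : dist (f^[n] (γ 0)) (f^[n] x) ≤ dist (γ 0) x := nonexp_iter hf n _ _
        have h3 : dist (γ 0) x = dist x (γ 0) := dist_comm _ _
        linarith
      linarith
  · -- Part (ii)
    intro hnell ζ hDW γ L hbrfp hstab hLle
    obtain ⟨hζray, hDWconv⟩ := hDW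
    obtain ⟨hray, hnetop, hGL⟩ := hbrfp
    obtain ⟨l, hl, hlim⟩ := hstab
    have htrio := trio_lemma hδ hgeo hslim hf hray hGL hl
    have hbound := dilation_upper_bound hδ hgeo hslim hf hray hGL hl hlim hLle
    have haev : ∀ M : ℝ, ∀ᶠ n : ℕ in Filter.atTop, M ≤ dist (γ 0) (f^[n] (γ 0)) := by
      intro M
      have h1 := (tendsto_gromovFilter_iff hζray).mp (hDWconv (γ 0)) (M + dist (ζ 0) (γ 0))
      filter_upwards [h1] with n hn
      have h2 := Gp_le_dist ζ (f^[n] (γ 0))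
      have h3 := dist_triangle (ζ 0) (γ 0) (f^[n] (γ 0))
      linarith
    have hGγ : ∀ M : ℝ, ∀ᶠ n : ℕ in Filter.atTop, M ≤ Gp γ (f^[n] (γ 0)) := by
      intro M
      filter_upwards [haev (2*M + (9*δ+6) + 2*δ + 2*(7*δ+5)),
        Filter.eventually_ge_atTop 1] with n han hn1
      obtain ⟨-, -, S, hS0, hTRK⟩ := htrio n
      obtain ⟨v, hv0, hvd, hvlow, hvup⟩ := hTRK S le_rfl
      have hd1 := dist_triangle (f^[n] (γ 0)) (f^[n] (γ S)) (γ v)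
      have hd2 : dist (f^[n] (γ 0)) (f^[n] (γ S)) ≤ S := by
        have h := nonexp_iter hf n (γ 0) (γ S)
        rwa [ray_dist0 hray hS0] at h
      have hstarS : S - l n - 2*δ ≤ dist (γ 0) (f^[n] (γ S)) :=
        star_lemma hgeo hslim hray (nonexp_iter hf n) (hl n hn1) hS0
      have hb := hbound n hn1
      have hgp : M ≤ gromovProd (γ 0) (f^[n] (γ 0)) (γ v) := by
        unfold gromovProd
        rw [ray_dist0 hray hv0]
        linarith [le_of_lt hvd]
      exact le_trans hgp (le_Gp hv0 _)
    have hprod : ∀ K : ℝ, ∃ U, 0 ≤ U ∧ ∀ u, U ≤ u → ∀ v, U ≤ v →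
        K ≤ gromovProd (γ 0) (γ u) (ζ v) := by
      intro K
      have h1 := hGγ (K + 3*δ + 2)
      have h2 := (tendsto_gromovFilter_iff hζray).mp (hDWconv (γ 0))
        (K + 3*δ + dist (γ 0) (ζ 0) + 2)
      obtain ⟨n, hn1, hn2⟩ := (h1.and h2).exists
      obtain ⟨t₁, ht₁0, hgt₁⟩ := exists_gp_gt
        (show K + 3*δ + 1 < Gp γ (f^[n] (γ 0)) by linarith)
      obtain ⟨t₂, ht₂0, hgt₂⟩ := exists_gp_gt
        (show K + 3*δ + dist (γ 0) (ζ 0) + 1 < Gp ζ (f^[n] (γ 0)) by linarith)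
      refine ⟨max t₁ t₂, le_trans ht₁0 (le_max_left _ _), fun u hu v hv => ?_⟩
      have hgu : K + 3*δ + 1 ≤ gromovProd (γ 0) (f^[n] (γ 0)) (γ u) :=
        le_trans (le_of_lt hgt₁)
          (gp_mono hray ht₁0 (le_trans (le_max_left _ _) hu) _)
      have hgv' : K + 3*δ + dist (γ 0) (ζ 0) + 1 ≤ gromovProd (ζ 0) (f^[n] (γ 0)) (ζ v) :=
        le_trans (le_of_lt hgt₂)
          (gp_mono hζray ht₂0 (le_trans (le_max_right _ _) hv) _)
      have hgv : K + 3*δ + 1 ≤ gromovProd (γ 0) (f^[n] (γ 0)) (ζ v) := by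
        have h3 := gp_base (γ 0) (ζ 0) (f^[n] (γ 0)) (ζ v)
        linarith
      have h4 := four_pt hgeo hslim (γ 0) (γ u) (ζ v) (f^[n] (γ 0))
      have hcomm : gromovProd (γ 0) (γ u) (f^[n] (γ 0))
          = gromovProd (γ 0) (f^[n] (γ 0)) (γ u) := gp_comm _ _ _
      have hmin : K + 3*δ + 1 ≤ min (gromovProd (γ 0) (γ u) (f^[n] (γ 0)))
          (gromovProd (γ 0) (f^[n] (γ 0)) (ζ v)) :=
        le_min (by rw [hcomm]; linarith) (by linarith)
      linarith
    obtain ⟨C, hC⟩ := rays_asymp hδ hgeo hslim hray hζray hprod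
    exact ⟨C, hC⟩
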